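/- Let (R_n)_{n≥1} be a sequence of probability measures on a metric space S converging weakly to R_0, let (V_ν)_{ν>0} be an increasing family of closed subsets of S with lim_{ν→∞} inf_{n≥1} R_n(V_ν) = 1, and let f : S → ℝ be a bounded function (bounded by M) such that for every ν the restriction f|_{V_ν} is continuous and extends to a continuous function Φ_ν : S → ℝ bounded by M. Then ∫ f dR_n → ∫ f dR_0. -/

import Mathlib

open MeasureTheory Set Filter Topology
open scoped ENNReal

lemma key_est {S : Type*} [MetricSpace S] [MeasurableSpace S] [BorelSpace S]
    (μ : Measure S) [IsProbabilityMeasure μ] {V : Set S} (hV : MeasurableSet V)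
    {f : S → ℝ} (hfi : Integrable f μ) (Φ : BoundedContinuousFunction S ℝ)
    (hΦf : ∀ s ∈ V, Φ s = f s) {M : ℝ} (hM : ∀ s, |f s| ≤ M) (hΦM : ∀ s, |Φ s| ≤ M) :
    |∫ s, f s ∂μ - ∫ s, Φ s ∂μ| ≤ 2 * M * (μ Vᶜ).toReal := by
  rw [← integral_sub hfi (Φ.integrable μ)]
  have h1 : |∫ s, (f s - Φ s) ∂μ| ≤ ∫ s, |f s - Φ s| ∂μ := by
    simpa [Real.norm_eq_abs] using norm_integral_le_integral_norm (μ := μ) (fun s => f s - Φ s)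
  refine h1.trans ?_
  have h2 : ∫ s, |f s - Φ s| ∂μ ≤ ∫ s, Vᶜ.indicator (fun _ => 2 * M) s ∂μ := by
    apply integral_mono (hfi.sub (Φ.integrable μ)).abs
      ((integrable_const (2 * M)).indicator hV.compl)
    intro s
    by_cases hs : s ∈ V
    · simp [Set.indicator_of_notMem, hs, hΦf s hs, abs_nonneg]
    · rw [Set.indicator_of_mem (by simpa using hs)]
      calc |f s - Φ s| ≤ |f s| + |Φ s| := abs_sub _ _
        _ ≤ M + M := add_le_add (hM s) (hΦM s)
        _ = 2 * M := by ring
  refine h2.trans_eq ?_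
  rw [integral_indicator_const _ hV.compl, smul_eq_mul, measureReal_def]; ring

theorem stmt8 {S : Type*} [MetricSpace S] [MeasurableSpace S] [BorelSpace S]
    (R : ℕ → Measure S) [∀ n, IsProbabilityMeasure (R n)]
    (R₀ : Measure S) [IsProbabilityMeasure R₀]
    (hweak : ∀ Φ : BoundedContinuousFunction S ℝ,
      Tendsto (fun n => ∫ s, Φ s ∂(R n)) atTop (𝓝 (∫ s, Φ s ∂(R₀))))
    (V : ℝ → Set S) (hVc : ∀ ν, IsClosed (V ν)) (hVm : Monotone V)
    (hV1 : Tendsto (fun ν : ℝ => ⨅ n, R n (V ν)) atTop (𝓝 (1 : ℝ≥0∞)))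
    (f : S → ℝ) (hf : Measurable f) (M : ℝ) (hfM : ∀ s, |f s| ≤ M)
    (hext : ∀ ν : ℝ, ContinuousOn f (V ν) ∧
      ∃ Φ : BoundedContinuousFunction S ℝ, (∀ s, |Φ s| ≤ M) ∧ ∀ s ∈ V ν, Φ s = f s) :
    Tendsto (fun n => ∫ s, f s ∂(R n)) atTop (𝓝 (∫ s, f s ∂(R₀))) := by
  -- nonempty S, M ≥ 0
  have hSne : Nonempty S := by
    by_contra h
    rw [not_nonempty_iff] at h
    have h1 : R₀ Set.univ = 1 := measure_univ
    rw [Set.univ_eq_empty_iff.mpr h, measure_empty] at h1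
    exact zero_ne_one h1
  have hM0 : 0 ≤ M := le_trans (abs_nonneg _) (hfM (Classical.arbitrary S))
  -- integrability
  have hfi : ∀ (μ : Measure S) [IsProbabilityMeasure μ], Integrable f μ := by
    intro μ _
    exact (integrable_const M).mono' hf.aestronglyMeasurable
      (ae_of_all _ (fun s => by simpa [Real.norm_eq_abs] using hfM s))
  -- probability measures, weak convergence
  set P : ℕ → ProbabilityMeasure S := fun n => ⟨R n, inferInstance⟩ with hP
  set P₀ : ProbabilityMeasure S := ⟨R₀, inferInstance⟩ with hP₀
  have hPtend : Tendsto P atTop (𝓝 P₀) :=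
    ProbabilityMeasure.tendsto_iff_forall_integral_tendsto.mpr (fun Φ => hweak Φ)
  rw [Metric.tendsto_atTop]
  intro ε hε
  set δ : ℝ := ε / (8 * (M + 1)) with hδdef
  have hδ : 0 < δ := div_pos hε (by nlinarith)
  -- choose ν
  have hlt : (1 : ℝ≥0∞) - ENNReal.ofReal δ < 1 :=
    ENNReal.sub_lt_self ENNReal.one_ne_top one_ne_zero (by simpa using hδ)
  obtain ⟨ν, hν⟩ := (hV1.eventually_const_lt hlt).exists
  have hn : ∀ n, (1 : ℝ≥0∞) - ENNReal.ofReal δ < R n (V ν) :=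
    fun n => lt_of_lt_of_le hν (iInf_le _ n)
  -- compl bounds for R n
  have hcompl : ∀ (μ : Measure S) [IsProbabilityMeasure μ],
      (1 : ℝ≥0∞) - ENNReal.ofReal δ ≤ μ (V ν) → (μ (V ν)ᶜ).toReal ≤ δ := by
    intro μ _ hμ
    have h1 : μ (V ν)ᶜ = 1 - μ (V ν) := prob_compl_eq_one_sub (hVc ν).measurableSet
    have h2 : (1 : ℝ≥0∞) - μ (V ν) ≤ ENNReal.ofReal δ := by
      rw [tsub_le_iff_right]
      calc (1 : ℝ≥0∞) ≤ (1 - ENNReal.ofReal δ) + ENNReal.ofReal δ := le_tsub_add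
        _ ≤ ENNReal.ofReal δ + μ (V ν) := by
            rw [add_comm]; exact add_le_add le_rfl hμ
    rw [h1]
    exact ENNReal.toReal_le_of_le_ofReal hδ.le h2
  -- R₀ bound via portmanteau
  have hlimsup : limsup (fun n => R n (V ν)) atTop ≤ R₀ (V ν) :=
    ProbabilityMeasure.limsup_measure_closed_le_of_tendsto hPtend (hVc ν)
  have hR₀ : (1 : ℝ≥0∞) - ENNReal.ofReal δ ≤ R₀ (V ν) := by
    refine le_trans ?_ hlimsup
    exact le_limsup_of_frequently_le (Frequently.of_forall (fun n => (hn n).le))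
  -- pick Φ
  obtain ⟨-, Φ, hΦM, hΦf⟩ := hext ν
  -- estimates
  have hest : ∀ (μ : Measure S) [IsProbabilityMeasure μ],
      (1 : ℝ≥0∞) - ENNReal.ofReal δ ≤ μ (V ν) →
      |∫ s, f s ∂μ - ∫ s, Φ s ∂μ| ≤ ε / 4 := by
    intro μ _ hμ
    have h1 := key_est μ (hVc ν).measurableSet (hfi μ) Φ hΦf hfM hΦM
    have h2 := hcompl μ hμ
    have h3 : 2 * M * (μ (V ν)ᶜ).toReal ≤ 2 * M * δ :=
      mul_le_mul_of_nonneg_left h2 (by linarith)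
    have h4 : 2 * M * δ ≤ ε / 4 := by
      rw [hδdef, ← mul_div_assoc, div_le_div_iff₀ (by nlinarith) (by norm_num)]
      nlinarith
    linarith [h1]
  -- choose N from weak convergence of Φ
  obtain ⟨N, hN⟩ := (Metric.tendsto_atTop.mp (hweak Φ)) (ε / 4) (by linarith)
  refine ⟨N, fun n hnN => ?_⟩
  have e1 := hest (R n) (hn n).le
  have e2 := hest R₀ hR₀
  have e3 := hN n hnN
  rw [Real.dist_eq] at e3 ⊢
  calc |∫ s, f s ∂(R n) - ∫ s, f s ∂(R₀)|
      ≤ |∫ s, f s ∂(R n) - ∫ s, Φ s ∂(R n)| + |∫ s, Φ s ∂(R n) - ∫ s, Φ s ∂(R₀)|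
        + |∫ s, Φ s ∂(R₀) - ∫ s, f s ∂(R₀)| := by
        have := abs_sub_le (∫ s, f s ∂(R n)) (∫ s, Φ s ∂(R n)) (∫ s, f s ∂(R₀))
        have := abs_sub_le (∫ s, Φ s ∂(R n)) (∫ s, Φ s ∂(R₀)) (∫ s, f s ∂(R₀))
        linarith
    _ < ε := by rw [abs_sub_comm (∫ s, Φ s ∂(R₀))] ; linarith
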